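/- Let μ be a probability measure on a measurable space, let (X_n)_{n≥1} be a uniformly bounded sequence of complex-valued random variables, and set S_N = (1/N) Σ_{n=1}^N X_n. If Σ_{N≥1} (1/N) ∫ |S_N|² dμ < ∞, then S_N → 0 μ-almost everywhere (Davenport–Erdős–LeVeque). -/

import Mathlib

open Filter MeasureTheory Topology

open Filter MeasureTheory Topology Finset

lemma del_det (C : ℝ) (hC : 0 ≤ C) (y : ℕ → ℂ) (hy : ∀ n, ‖y n‖ ≤ C)
    (s : ℕ → ℂ) (hs : ∀ N, s N = (N : ℂ)⁻¹ * ∑ n ∈ Finset.Icc 1 N, y n)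
    (h : Summable fun N : ℕ => (N : ℝ)⁻¹ * ‖s N‖ ^ 2) :
    Tendsto s atTop (𝓝 0) := by
  rw [NormedAddCommGroup.tendsto_nhds_zero]
  intro ε hε
  obtain ⟨m, hm⟩ := exists_nat_ge ((2 * C + ε) / ε)
  have hm0 : 0 < m := by
    have h1 : (1:ℝ) ≤ (2*C+ε)/ε := by rw [le_div_iff₀ hε]; linarith
    have h2 : (1:ℝ) ≤ (m:ℝ) := h1.trans hm
    exact_mod_cast lt_of_lt_of_le zero_lt_one h2
  have hmR : (2 * C + ε) ≤ m * ε := by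
    rw [div_le_iff₀ hε] at hm; linarith
  set δ : ℝ := ε ^ 2 / (8 * m) with hδdef
  have hδ : 0 < δ := by positivity
  obtain ⟨t₀, ht₀⟩ := (summable_iff_vanishing.mp h) (Set.Iio δ) (Iio_mem_nhds hδ)
  rw [eventually_atTop]
  refine ⟨max (t₀.sup id + 1) 1, fun N₀ hN₀ => ?_⟩
  by_contra hcon
  push_neg at hcon
  have hN₀1 : 1 ≤ N₀ := le_trans (le_max_right _ _) hN₀
  have hN₀R : (0:ℝ) < N₀ := by exact_mod_cast hN₀1
  set k := N₀ / m with hk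
  clear_value k
  have hnormT : ∀ N, ‖∑ n ∈ Finset.Ioc 0 N, y n‖ = N * ‖s N‖ := by
    intro N
    rcases Nat.eq_zero_or_pos N with h0 | h1
    · subst h0; simp
    · have hne : (N:ℂ) ≠ 0 := by
        exact_mod_cast Nat.pos_iff_ne_zero.mp h1
      have : s N = (N : ℂ)⁻¹ * ∑ n ∈ Finset.Ioc 0 N, y n := by
        rw [hs N, ← Finset.Icc_add_one_left_eq_Ioc, zero_add]
      rw [this, norm_mul, norm_inv, Complex.norm_natCast]
      have hNR : (0:ℝ) < N := by exact_mod_cast h1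
      field_simp
  -- key pointwise bound on the interval
  have key : ∀ N ∈ Finset.Icc N₀ (N₀ + k), ε^2/4 * (2 * (N₀:ℝ))⁻¹ ≤ (N:ℝ)⁻¹ * ‖s N‖ ^ 2 := by
    intro N hN
    rw [Finset.mem_Icc] at hN
    obtain ⟨hN1, hN2⟩ := hN
    set j := N - N₀ with hj
    have hNj : N = N₀ + j := by omega
    have hjk : j ≤ k := by omega
    have hjm : (j:ℝ) * m ≤ N₀ := by
      have : j * m ≤ N₀ := (Nat.le_div_iff_mul_le hm0).mp (hk ▸ hjk)
      exact_mod_cast this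
    have hN0 : (0:ℝ) < N := by
      have : 1 ≤ N := le_trans hN₀1 hN1
      exact_mod_cast this
    have hdiff : ‖(∑ n ∈ Finset.Ioc 0 N, y n) - ∑ n ∈ Finset.Ioc 0 N₀, y n‖ ≤ j * C := by
      have hsplit : (∑ n ∈ Finset.Ioc 0 N₀, y n) + ∑ n ∈ Finset.Ioc N₀ N, y n
          = ∑ n ∈ Finset.Ioc 0 N, y n := Finset.sum_Ioc_consecutive y (Nat.zero_le N₀) hN1
      have : (∑ n ∈ Finset.Ioc 0 N, y n) - ∑ n ∈ Finset.Ioc 0 N₀, y n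
          = ∑ n ∈ Finset.Ioc N₀ N, y n := by rw [← hsplit]; ring
      rw [this]
      calc ‖∑ n ∈ Finset.Ioc N₀ N, y n‖ ≤ ∑ n ∈ Finset.Ioc N₀ N, ‖y n‖ := norm_sum_le _ _
        _ ≤ ∑ _n ∈ Finset.Ioc N₀ N, C := Finset.sum_le_sum fun n _ => hy n
        _ = ((N - N₀ : ℕ) : ℝ) * C := by
            rw [Finset.sum_const, Nat.card_Ioc, nsmul_eq_mul]
        _ = j * C := by rw [hj]
    have hTN₀ : (N₀:ℝ) * ε ≤ ‖∑ n ∈ Finset.Ioc 0 N₀, y n‖ := by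
      rw [hnormT N₀]
      exact mul_le_mul_of_nonneg_left hcon hN₀R.le
    have hTN : (N₀:ℝ) * ε - j * C ≤ ‖∑ n ∈ Finset.Ioc 0 N, y n‖ := by
      have h1 := norm_sub_norm_le (∑ n ∈ Finset.Ioc 0 N₀, y n) (∑ n ∈ Finset.Ioc 0 N, y n)
      rw [norm_sub_rev] at h1
      linarith
    have hhalf : (N:ℝ) * (ε/2) ≤ (N₀:ℝ) * ε - j * C := by
      have hNR : (N:ℝ) = (N₀:ℝ) + (j:ℝ) := by exact_mod_cast hNj
      rw [hNR]
      nlinarith [Nat.cast_nonneg (α := ℝ) j]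
    have hsN : ε/2 ≤ ‖s N‖ := by
      have h2 : (N:ℝ) * (ε/2) ≤ (N:ℝ) * ‖s N‖ := by rw [← hnormT N]; linarith
      exact le_of_mul_le_mul_left h2 hN0
    have hNle : (N:ℝ) ≤ 2 * N₀ := by
      have hkN : k ≤ N₀ := hk ▸ Nat.div_le_self _ _
      have : N ≤ 2 * N₀ := by omega
      exact_mod_cast this
    have h1 : (2 * (N₀:ℝ))⁻¹ ≤ (N:ℝ)⁻¹ := inv_anti₀ hN0 hNle
    have h2 : ε^2/4 ≤ ‖s N‖^2 := by nlinarith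
    calc ε^2/4 * (2*(N₀:ℝ))⁻¹ ≤ ‖s N‖^2 * (N:ℝ)⁻¹ :=
          mul_le_mul h2 h1 (by positivity) (by positivity)
      _ = (N:ℝ)⁻¹ * ‖s N‖^2 := by ring
  have hcard : (Finset.Icc N₀ (N₀+k)).card = k + 1 := by
    rw [Nat.card_Icc]; omega
  have hsum_lb : δ ≤ ∑ N ∈ Finset.Icc N₀ (N₀+k), (N:ℝ)⁻¹ * ‖s N‖ ^ 2 := by
    have hb := Finset.card_nsmul_le_sum (Finset.Icc N₀ (N₀+k)) _ _ key
    rw [hcard, nsmul_eq_mul] at hb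
    refine le_trans ?_ hb
    have hlt : N₀ < (k+1) * m := by
      calc N₀ = m * k + N₀ % m := by rw [hk]; exact (Nat.div_add_mod N₀ m).symm
        _ < m * k + m := Nat.add_lt_add_left (Nat.mod_lt N₀ hm0) _
        _ = (k+1) * m := by ring
    have hk1 : (N₀:ℝ) / m ≤ (k:ℝ) + 1 := by
      have hR : (N₀:ℝ) < ((k:ℝ)+1) * m := by exact_mod_cast hlt
      rw [div_le_iff₀ (by exact_mod_cast hm0)]
      linarith
    have hmRpos : (0:ℝ) < m := by exact_mod_cast hm0
    rw [hδdef]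
    calc ε^2/(8*(m:ℝ)) = ((N₀:ℝ)/m) * (ε^2/4 * (2*(N₀:ℝ))⁻¹) := by
          field_simp; ring
      _ ≤ ((k:ℝ)+1) * (ε^2/4 * (2*(N₀:ℝ))⁻¹) :=
          mul_le_mul_of_nonneg_right hk1 (by positivity)
      _ = ((k+1 : ℕ):ℝ) * (ε^2/4 * (2*(N₀:ℝ))⁻¹) := by push_cast; ring
  have hdisj : Disjoint (Finset.Icc N₀ (N₀+k)) t₀ := by
    rw [Finset.disjoint_left]
    intro a ha hat
    rw [Finset.mem_Icc] at ha
    have h1 : a ≤ t₀.sup id := Finset.le_sup (f := id) hat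
    have h2 : t₀.sup id + 1 ≤ N₀ := le_trans (le_max_left _ _) hN₀
    omega
  have := ht₀ _ hdisj
  rw [Set.mem_Iio] at this
  linarith


/-- **Davenport–Erdős–LeVeque**: let `μ` be a probability measure, `(X n)_{n ≥ 1}` a uniformly
bounded sequence of complex random variables, and `S N = (1/N) ∑_{n=1}^N X n`.  If
`∑_{N ≥ 1} (1/N) ∫ |S N|² dμ < ∞`, then `S N → 0` `μ`-almost everywhere. -/
theorem davenport_erdos_leveque {E : Type*} [MeasurableSpace E]
    (μ : Measure E) [IsProbabilityMeasure μ]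
    (X : ℕ → E → ℂ) (hmeas : ∀ n, Measurable (X n))
    (C : ℝ) (hbd : ∀ n x, ‖X n x‖ ≤ C)
    (S : ℕ → E → ℂ)
    (hS : ∀ N x, S N x = (N : ℂ)⁻¹ * ∑ n ∈ Finset.Icc 1 N, X n x)
    (hsum : Summable fun N : ℕ => (N : ℝ)⁻¹ * ∫ x, ‖S N x‖ ^ 2 ∂μ) :
    ∀ᵐ x ∂μ, Tendsto (fun N : ℕ => S N x) atTop (𝓝 0) := by
  have hne : Nonempty E := by
    by_contra hc
    rw [not_nonempty_iff] at hc
    have h1 : μ Set.univ = 1 := measure_univ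
    rw [Set.univ_eq_empty_iff.mpr hc, measure_empty] at h1
    exact zero_ne_one h1
  obtain ⟨x₀⟩ := hne
  have hC : 0 ≤ C := le_trans (norm_nonneg _) (hbd 0 x₀)
  -- measurability & boundedness of S N
  have hSm : ∀ N, Measurable (S N) := by
    intro N
    have : S N = fun x => (N : ℂ)⁻¹ * ∑ n ∈ Finset.Icc 1 N, X n x := funext (hS N)
    rw [this]
    exact measurable_const.mul (Finset.measurable_sum _ fun n _ => hmeas n)
  have hSbd : ∀ N x, ‖S N x‖ ≤ C := by
    intro N x
    rw [hS N x]
    calc ‖(N : ℂ)⁻¹ * ∑ n ∈ Finset.Icc 1 N, X n x‖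
        = (N:ℝ)⁻¹ * ‖∑ n ∈ Finset.Icc 1 N, X n x‖ := by
          rw [norm_mul, norm_inv, Complex.norm_natCast]
      _ ≤ (N:ℝ)⁻¹ * (N * C) := by
          apply mul_le_mul_of_nonneg_left _ (by positivity)
          calc ‖∑ n ∈ Finset.Icc 1 N, X n x‖ ≤ ∑ n ∈ Finset.Icc 1 N, ‖X n x‖ :=
                norm_sum_le _ _
            _ ≤ ∑ _n ∈ Finset.Icc 1 N, C := Finset.sum_le_sum fun n _ => hbd n x
            _ = (N:ℝ) * C := by
                rw [Finset.sum_const, Nat.card_Icc, nsmul_eq_mul]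
                norm_num
      _ ≤ C := by
          rcases Nat.eq_zero_or_pos N with h0 | h1
          · subst h0; simp [hC]
          · have : (0:ℝ) < N := by exact_mod_cast h1
            rw [inv_mul_le_iff₀ this]
  set f : ℕ → E → ℝ := fun N x => (N : ℝ)⁻¹ * ‖S N x‖ ^ 2 with hf
  have hfmeas : ∀ N, Measurable (f N) :=
    fun N => measurable_const.mul (((hSm N).norm).pow_const 2)
  have hfnn : ∀ N x, 0 ≤ f N x := fun N x => by positivity
  have hfbd : ∀ N x, ‖f N x‖ ≤ C ^ 2 := by
    intro N x
    rw [Real.norm_of_nonneg (hfnn N x), hf]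
    have h1 : (N:ℝ)⁻¹ ≤ 1 := by
      rcases Nat.eq_zero_or_pos N with h0 | h1
      · subst h0; norm_num
      · exact Nat.cast_inv_le_one N
    have h2 : ‖S N x‖ ^ 2 ≤ C ^ 2 := by nlinarith [hSbd N x, norm_nonneg (S N x)]
    nlinarith [sq_nonneg ‖S N x‖]
  have hfint : ∀ N, Integrable (f N) μ := fun N =>
    ⟨(hfmeas N).aestronglyMeasurable, HasFiniteIntegral.of_bounded (C := C ^ 2)
      (ae_of_all _ (hfbd N))⟩
  -- lintegral of tsum is finite
  have hint_eq : ∀ N, ∫ x, f N x ∂μ = (N : ℝ)⁻¹ * ∫ x, ‖S N x‖ ^ 2 ∂μ := fun N =>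
    integral_const_mul _ _
  have hsum' : Summable fun N => ∫ x, f N x ∂μ := by
    simpa only [hint_eq] using hsum
  have hlin : ∫⁻ x, ∑' N, ENNReal.ofReal (f N x) ∂μ ≠ ⊤ := by
    rw [lintegral_tsum fun N => ((hfmeas N).ennreal_ofReal).aemeasurable]
    have heq : ∀ N : ℕ, ∫⁻ x, ENNReal.ofReal (f N x) ∂μ = ENNReal.ofReal (∫ x, f N x ∂μ) :=
      fun N => (ofReal_integral_eq_lintegral_ofReal (hfint N) (ae_of_all _ (hfnn N))).symm
    rw [tsum_congr heq, ← ENNReal.ofReal_tsum_of_nonneg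
      (fun N => integral_nonneg (hfnn N)) hsum']
    exact ENNReal.ofReal_ne_top
  have hae : ∀ᵐ x ∂μ, ∑' N, ENNReal.ofReal (f N x) < ⊤ :=
    ae_lt_top (Measurable.ennreal_tsum fun N => (hfmeas N).ennreal_ofReal) hlin
  filter_upwards [hae] with x hx
  have hsummx : Summable fun N : ℕ => (N : ℝ)⁻¹ * ‖S N x‖ ^ 2 := by
    have h1 := ENNReal.summable_toReal hx.ne
    have h2 : (fun N : ℕ => (ENNReal.ofReal (f N x)).toReal) = fun N : ℕ => f N x :=
      funext fun N => ENNReal.toReal_ofReal (hfnn N x)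
    rw [h2] at h1
    exact h1
  exact del_det C hC (fun n => X n x) (fun n => hbd n x) (fun N => S N x)
    (fun N => hS N x) hsummx
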